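/- Let R be a route in B_0 with colors (a_1,…,a_l), and let v_i denote the source of the arrow of color a_i (i = 1,…,l). Suppose a_1 ∼ a_l and a_i ≁ a_l for all i = 2,…,l−1. Then for every i = 2,…,l−1 there exists an arrow of color a_l in B_0 with source v_i. -/

import Mathlib

/-- The arrows (source, color, target) of the crystal graph of the
Kirillov–Reshetikhin crystal `B^{1,1}` of type `E6^(1)`. -/
def arrows : List (ℕ × ℕ × ℕ) :=
  [(1,1,2),(2,2,3),(3,3,4),(4,4,5),(4,6,7),(5,5,6),(5,6,8),(6,6,9),(7,4,8),(8,5,9),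
   (8,3,10),(9,3,11),(10,5,11),(10,2,13),(11,4,12),(11,2,14),(12,2,15),(13,5,14),
   (13,1,18),(14,4,15),(14,1,19),(15,3,16),(15,1,20),(16,6,17),(16,1,21),(17,1,22),
   (18,5,19),(19,4,20),(20,3,21),(21,6,22),(21,2,23),(22,2,24),(23,6,24),(24,3,25),
   (25,4,26),(26,5,27),(17,0,1),(22,0,2),(24,0,3),(25,0,4),(26,0,5),(27,0,6)]

/-- Adjacency in the `E6` Dynkin diagram. -/
def adjPairs : List (ℕ × ℕ) :=
  [(1,2),(2,1),(2,3),(3,2),(3,4),(4,3),(4,5),(5,4),(3,6),(6,3)]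

def Adj (a b : ℕ) : Prop := (a, b) ∈ adjPairs

instance (a b : ℕ) : Decidable (Adj a b) := by unfold Adj; infer_instance

/-- The Cartan matrix of `E6`. -/
def Cmat (a b : ℕ) : ℤ := if a = b then 2 else if Adj a b then -1 else 0

/-- A route in `B_0`: a list of consecutive arrows of nonzero color. -/
def IsRoute (R : List (ℕ × ℕ × ℕ)) : Prop :=
  (∀ β ∈ R, β ∈ arrows ∧ β.2.1 ≠ 0) ∧ R.Chain' (fun β β' => β.2.2 = β'.1)

lemma colorMem : ∀ β ∈ arrows, β.2.1 ≠ 0 → β.2.1 ∈ [1,2,3,4,5,6] := by decide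

lemma key : ∀ β ∈ arrows, β.2.1 ≠ 0 → ∀ c ∈ [1,2,3,4,5,6], ¬ Adj β.2.1 c →
    (∃ γ ∈ arrows, γ.1 = β.2.2 ∧ γ.2.1 = c) →
    ∃ γ ∈ arrows, γ.1 = β.1 ∧ γ.2.1 = c := by decide

/-- Lemma 2.2(4): if a route has colors `(a_1, …, a_l)` with `a_1 ∼ a_l` and
`a_i ≁ a_l` for `i = 2, …, l−1`, then from the source `v_i` of each intermediate
arrow there is an arrow of color `a_l`. -/
theorem stmt3 (R : List (ℕ × ℕ × ℕ)) (hR : IsRoute R) (hne : R ≠ [])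
    (hadj : Adj (R.head hne).2.1 (R.getLast hne).2.1)
    (hmid : ∀ j (hj : j < R.length), 0 < j → j < R.length - 1 →
      ¬ Adj (R.get ⟨j, hj⟩).2.1 (R.getLast hne).2.1) :
    ∀ j (hj : j < R.length), 0 < j → j < R.length - 1 →
      ∃ t, ((R.get ⟨j, hj⟩).1, (R.getLast hne).2.1, t) ∈ arrows := by
  set c := (R.getLast hne).2.1 with hc
  obtain ⟨hmem, hchain⟩ := hR
  have hlast : R.getLast hne ∈ R := List.getLast_mem hne
  have hlastArr := hmem _ hlast
  have hcmem : c ∈ [1,2,3,4,5,6] := colorMem _ hlastArr.1 hlastArr.2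
  have hgetLast : R.getLast hne = R.get ⟨R.length - 1, by
      have := List.length_pos_iff.mpr hne; omega⟩ := List.getLast_eq_getElem hne
  have hchain' := List.isChain_iff_getElem.mp hchain
  -- main downward induction
  have main : ∀ k j (hj : j < R.length), 1 ≤ j → j + k + 1 = R.length →
      ∃ γ ∈ arrows, γ.1 = (R.get ⟨j, hj⟩).1 ∧ γ.2.1 = c := by
    intro k
    induction k with
    | zero =>
      intro j hj _ hjk
      have hje : j = R.length - 1 := by omega
      subst hje
      exact ⟨R.get ⟨R.length - 1, hj⟩, (hmem _ (List.get_mem R ⟨_, _⟩)).1, rfl,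
        by rw [hc, hgetLast]⟩
    | succ k ih =>
      intro j hj hjpos hjk
      have hj1 : j + 1 < R.length := by omega
      obtain ⟨γ, hγmem, hγ1, hγ2⟩ := ih (j + 1) hj1 (by omega) (by omega)
      have hβ := hmem _ (List.get_mem R ⟨j, hj⟩)
      have hnadj : ¬ Adj (R.get ⟨j, hj⟩).2.1 c := hmid j hj hjpos (by omega)
      have hcon : (R.get ⟨j, hj⟩).2.2 = (R.get ⟨j + 1, hj1⟩).1 :=
        hchain' j (by omega)
      exact key _ hβ.1 hβ.2 c hcmem hnadj ⟨γ, hγmem, by rw [hγ1, hcon], hγ2⟩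
  intro j hj hjpos hjlt
  obtain ⟨γ, hγmem, hγ1, hγ2⟩ := main (R.length - 1 - j) j hj hjpos (by omega)
  exact ⟨γ.2.2, by rw [← hγ1, ← hγ2]; exact hγmem⟩
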